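/- Let k : ℝ^d → ℝ be convex and differentiable at v ∈ ℝ^d, and suppose k(v) = sup_{u ∈ Λ̄, t>0} (u·v − t·l(u) − H(t)) where Λ̄ is compact, l : Λ̄ → ℝ is lower semicontinuous and bounded below, and H satisfies (A2), and suppose the supremum is attained. Then the maximizing pair (u₀, t₀) is unique, and is characterized by u₀ = ∇k(v) and H'(t₀) + l(u₀) = 0. -/

import Mathlib

open Filter
open scoped RealInnerProductSpace

/-- let `k` be convex, differentiable at `v` with gradient `g`,
equal to the transform `k(w) = sup_{u ∈ Λ̄, t>0}(u·w − t l(u) − H(t))`, with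
`Λ̄` compact, `l` lsc and bounded below on `Λ̄`, `H` satisfying (A2), and the
supremum at `v` attained. Then every maximizing pair `(u,t)` satisfies
`u = ∇k(v)` and `H'(t) + l(u) = 0`; in particular the maximizing pair is
unique. -/
theorem statement_12 {d : ℕ} (Λc : Set (EuclideanSpace ℝ (Fin d)))
    (hne : Λc.Nonempty) (hcomp : IsCompact Λc)
    (l : EuclideanSpace ℝ (Fin d) → ℝ)
    (hlsc : LowerSemicontinuousOn l Λc)
    (m : ℝ) (hm : ∀ u ∈ Λc, m ≤ l u)
    (H H' : ℝ → ℝ)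
    (hderiv : ∀ t ∈ Set.Ioi (0 : ℝ), HasDerivAt H (H' t) t)
    (hderivCont : ContinuousOn H' (Set.Ioi 0))
    (hconv : StrictConvexOn ℝ (Set.Ioi 0) H)
    (hlim1 : Tendsto H (nhdsWithin 0 (Set.Ioi 0)) atTop)
    (hlim2 : Tendsto (fun t => H t / t) atTop atTop)
    (k : EuclideanSpace ℝ (Fin d) → ℝ)
    (hkconv : ConvexOn ℝ Set.univ k)
    (hk : ∀ w, IsLUB
      {y | ∃ u ∈ Λc, ∃ t > (0 : ℝ), y = ⟪u, w⟫ - t * l u - H t} (k w))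
    (v g : EuclideanSpace ℝ (Fin d)) (hgrad : HasGradientAt k g v)
    (hattain : ∃ u ∈ Λc, ∃ t > (0 : ℝ), k v = ⟪u, v⟫ - t * l u - H t) :
    (∀ u ∈ Λc, ∀ t > (0 : ℝ), k v = ⟪u, v⟫ - t * l u - H t →
      u = g ∧ H' t + l u = 0) ∧
    (∀ u₁ ∈ Λc, ∀ u₂ ∈ Λc, ∀ t₁ > (0 : ℝ), ∀ t₂ > (0 : ℝ),
      k v = ⟪u₁, v⟫ - t₁ * l u₁ - H t₁ →
      k v = ⟪u₂, v⟫ - t₂ * l u₂ - H t₂ → u₁ = u₂ ∧ t₁ = t₂) := by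
  have hub : ∀ u ∈ Λc, ∀ s > (0:ℝ), ∀ w, ⟪u, w⟫ - s * l u - H s ≤ k w := by
    intro u hu s hs w
    exact (hk w).1 ⟨u, hu, s, hs, rfl⟩
  have main : ∀ u ∈ Λc, ∀ t > (0 : ℝ), k v = ⟪u, v⟫ - t * l u - H t →
      u = g ∧ H' t + l u = 0 := by
    intro u hu t ht heq
    -- Part 1: u = g
    have hmin : IsLocalMin (fun w => k w - ⟪u, w⟫) v := by
      apply Filter.Eventually.of_forall
      intro w
      have h1 := hub u hu t ht w
      simp only
      rw [heq]
      linarith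
    have hfd : HasFDerivAt (fun w => k w - ⟪u, w⟫)
        ((InnerProductSpace.toDual ℝ _ g : EuclideanSpace ℝ (Fin d) →L[ℝ] ℝ)
          - innerSL ℝ u) v :=
      hgrad.hasFDerivAt.sub (innerSL ℝ u).hasFDerivAt
    have hzero := hmin.hasFDerivAt_eq_zero hfd
    have hug : u = g := by
      apply ext_inner_right (𝕜 := ℝ)
      intro w
      have := congrFun (congrArg DFunLike.coe hzero) w
      simp [InnerProductSpace.toDual, sub_eq_zero] at this
      exact this.symm
    -- Part 2: H' t + l u = 0
    have hminψ : IsLocalMin (fun s => s * l u + H s) t := by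
      apply IsMinOn.isLocalMin (s := Set.Ioi 0) _ (isOpen_Ioi.mem_nhds ht)
      intro s hs
      have h1 := hub u hu s hs v
      simp only [Set.mem_setOf_eq]
      rw [heq] at h1
      linarith
    have hψd : HasDerivAt (fun s => s * l u + H s) (l u + H' t) t := by
      have := (hasDerivAt_id t).mul_const (l u)
      have h2 := this.add (hderiv t ht)
      rw [one_mul] at h2
      exact h2
    have := hminψ.hasDerivAt_eq_zero hψd
    exact ⟨hug, by linarith⟩
  refine ⟨main, ?_⟩
  intro u₁ hu₁ u₂ hu₂ t₁ ht₁ t₂ ht₂ heq₁ heq₂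
  obtain ⟨hg₁, -⟩ := main u₁ hu₁ t₁ ht₁ heq₁
  obtain ⟨hg₂, -⟩ := main u₂ hu₂ t₂ ht₂ heq₂
  refine ⟨hg₁.trans hg₂.symm, ?_⟩
  by_contra hne'
  subst hg₁
  rw [hg₂] at heq₂
  -- ψ s = s * l g + H s equal at t₁ t₂, strictly convex, both minima
  set ψ : ℝ → ℝ := fun s => s * l u₁ + H s with hψ
  have hψeq : ψ t₁ = ψ t₂ := by simp only [hψ]; linarith [heq₁, heq₂]
  have ht₃ : (0:ℝ) < (t₁ + t₂)/2 := by
    linarith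
  have hstrict := hconv.2 ht₁ ht₂ hne' (by norm_num : (0:ℝ) < 1/2)
      (by norm_num : (0:ℝ) < 1/2) (by norm_num)
  have hlb := hub u₁ hu₁ ((t₁+t₂)/2) ht₃ v
  rw [heq₁] at hlb
  simp only [smul_eq_mul] at hstrict
  have h3 : H ((t₁+t₂)/2) < (H t₁ + H t₂)/2 := by
    have : (1:ℝ)/2 * t₁ + 1/2 * t₂ = (t₁+t₂)/2 := by ring
    rw [this] at hstrict; linarith
  have hψ3 : ψ ((t₁+t₂)/2) < ψ t₁ := by
    simp only [hψ]
    have : ψ t₂ = ψ t₁ := hψeq.symm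
    simp only [hψ] at this
    nlinarith
  simp only [hψ] at hψ3
  linarith
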